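/- Let B be the 10×10 edge-substitution matrix of the chair tiling (as above). Then the direct limit of ℤ¹⁰ → ℤ¹⁰ → ⋯ with bonding map given by multiplication by Bᵀ is isomorphic as an abelian group to ℤ[1/2] ⊕ ℤ⁸. -/

import Mathlib

/-- The additive group `ℤ[1/2]` of dyadic rationals, as an additive subgroup of `ℚ`. -/
def dyadic : AddSubgroup ℚ :=
  AddSubgroup.closure {q : ℚ | ∃ n : ℕ, q = ((2 : ℚ) ^ n)⁻¹}

/-- The abelianization matrix of the substitution induced on horizontal edges of the
decorated chair tiling. -/
def chairEdgeMatrix : Matrix (Fin 10) (Fin 10) ℤ :=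
  !![1,0,0,0,0,0,0,0,0,0;
     0,1,0,0,0,0,0,0,0,0;
     0,0,1,1,1,1,0,0,1,1;
     1,1,1,1,0,0,1,1,0,0;
     0,0,0,0,1,0,0,0,0,0;
     0,0,0,0,0,1,0,0,0,0;
     0,0,0,0,0,0,1,0,0,0;
     0,0,0,0,0,0,0,1,0,0;
     0,0,0,0,0,0,0,0,1,0;
     0,0,0,0,0,0,0,0,0,1]

/-- The endomorphism of `ℤ¹⁰` given by multiplication by the transpose of the edge matrix. -/
def edgeEnd : AddMonoid.End (Fin 10 → ℤ) :=
  (chairEdgeMatrix.transpose.mulVecLin).toAddMonoidHom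

/- ### Vector literal evaluation lemmas -/
section vecEval
variable {α : Type*} (a0 a1 a2 a3 a4 a5 a6 a7 a8 a9 : α)
lemma v10_0 : ![a0,a1,a2,a3,a4,a5,a6,a7,a8,a9] 0 = a0 := rfl
lemma v10_1 : ![a0,a1,a2,a3,a4,a5,a6,a7,a8,a9] 1 = a1 := rfl
lemma v10_2 : ![a0,a1,a2,a3,a4,a5,a6,a7,a8,a9] 2 = a2 := rfl
lemma v10_3 : ![a0,a1,a2,a3,a4,a5,a6,a7,a8,a9] 3 = a3 := rfl
lemma v10_4 : ![a0,a1,a2,a3,a4,a5,a6,a7,a8,a9] 4 = a4 := rfl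
lemma v10_5 : ![a0,a1,a2,a3,a4,a5,a6,a7,a8,a9] 5 = a5 := rfl
lemma v10_6 : ![a0,a1,a2,a3,a4,a5,a6,a7,a8,a9] 6 = a6 := rfl
lemma v10_7 : ![a0,a1,a2,a3,a4,a5,a6,a7,a8,a9] 7 = a7 := rfl
lemma v10_8 : ![a0,a1,a2,a3,a4,a5,a6,a7,a8,a9] 8 = a8 := rfl
lemma v10_9 : ![a0,a1,a2,a3,a4,a5,a6,a7,a8,a9] 9 = a9 := rfl
lemma v8_0 : ![a0,a1,a2,a3,a4,a5,a6,a7] 0 = a0 := rfl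
lemma v8_1 : ![a0,a1,a2,a3,a4,a5,a6,a7] 1 = a1 := rfl
lemma v8_2 : ![a0,a1,a2,a3,a4,a5,a6,a7] 2 = a2 := rfl
lemma v8_3 : ![a0,a1,a2,a3,a4,a5,a6,a7] 3 = a3 := rfl
lemma v8_4 : ![a0,a1,a2,a3,a4,a5,a6,a7] 4 = a4 := rfl
lemma v8_5 : ![a0,a1,a2,a3,a4,a5,a6,a7] 5 = a5 := rfl
lemma v8_6 : ![a0,a1,a2,a3,a4,a5,a6,a7] 6 = a6 := rfl
lemma v8_7 : ![a0,a1,a2,a3,a4,a5,a6,a7] 7 = a7 := rfl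
end vecEval

lemma edgeEnd_apply (v : Fin 10 → ℤ) :
    edgeEnd v = ![v 0 + v 3, v 1 + v 3, v 2 + v 3, v 2 + v 3, v 2 + v 4,
      v 2 + v 5, v 3 + v 6, v 3 + v 7, v 2 + v 8, v 2 + v 9] := by
  funext i
  show chairEdgeMatrix.transpose.mulVecLin v i = _
  simp only [chairEdgeMatrix, Matrix.mulVecLin_apply, Matrix.mulVec, Matrix.transpose_apply]
  fin_cases i <;>
    simp [Fin.sum_univ_succ, dotProduct, Function.comp, Matrix.vecHead, Matrix.vecTail,
      v10_0, v10_1, v10_2, v10_3, v10_4, v10_5, v10_6, v10_7, v10_8, v10_9] <;> rfl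

/-- The eigenvalue-2 functional `v ↦ v₂ + v₃`. -/
def phiF : (Fin 10 → ℤ) →+ ℤ where
  toFun v := v 2 + v 3
  map_zero' := by simp
  map_add' x y := by simp; ring

/-- Eight eigenvalue-1 functionals. -/
def psiF : (Fin 10 → ℤ) →+ (Fin 8 → ℤ) where
  toFun v := ![v 0 - v 1, v 1 - v 2, v 2 - v 6, v 6 - v 7,
               v 3 - v 4, v 4 - v 5, v 5 - v 8, v 8 - v 9]
  map_zero' := by
    funext k
    fin_cases k <;> simp [v8_0, v8_1, v8_2, v8_3, v8_4, v8_5, v8_6, v8_7]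
  map_add' x y := by
    funext k
    fin_cases k <;> simp [v8_0, v8_1, v8_2, v8_3, v8_4, v8_5, v8_6, v8_7] <;> ring

lemma psiF_apply (v : Fin 10 → ℤ) (k : Fin 8) :
    psiF v k = ![v 0 - v 1, v 1 - v 2, v 2 - v 6, v 6 - v 7,
               v 3 - v 4, v 4 - v 5, v 5 - v 8, v 8 - v 9] k := rfl

lemma phiF_edgeEnd (v : Fin 10 → ℤ) : phiF (edgeEnd v) = 2 * phiF v := by
  simp [edgeEnd_apply, phiF, v10_2, v10_3]; ring

lemma psiF_edgeEnd (v : Fin 10 → ℤ) : psiF (edgeEnd v) = psiF v := by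
  funext k
  rw [psiF_apply, psiF_apply, edgeEnd_apply]
  fin_cases k <;>
    simp [v10_0, v10_1, v10_2, v10_3, v10_4, v10_5, v10_6, v10_7, v10_8, v10_9,
      v8_0, v8_1, v8_2, v8_3, v8_4, v8_5, v8_6, v8_7] <;> ring

lemma phiF_pow (k : ℕ) (v : Fin 10 → ℤ) : phiF ((edgeEnd ^ k) v) = 2 ^ k * phiF v := by
  induction k with
  | zero => simp
  | succ n ih =>
      rw [pow_succ', show ((edgeEnd * edgeEnd ^ n) v = edgeEnd ((edgeEnd ^ n) v)) from rfl,
        phiF_edgeEnd, ih, pow_succ]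
      ring

lemma psiF_pow (k : ℕ) (v : Fin 10 → ℤ) : psiF ((edgeEnd ^ k) v) = psiF v := by
  induction k with
  | zero => simp
  | succ n ih =>
      rw [pow_succ', show ((edgeEnd * edgeEnd ^ n) v = edgeEnd ((edgeEnd ^ n) v)) from rfl,
        psiF_edgeEnd, ih]

lemma edgeEnd_eq_zero {v : Fin 10 → ℤ} (h1 : phiF v = 0) (h2 : psiF v = 0) :
    edgeEnd v = 0 := by
  have e : ∀ k : Fin 8, psiF v k = 0 := fun k => by rw [h2]; rfl
  have e0 := e 0; have e1 := e 1; have e2 := e 2; have e3 := e 3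
  have e4 := e 4; have e5 := e 5; have e6 := e 6; have e7 := e 7
  rw [psiF_apply] at e0 e1 e2 e3 e4 e5 e6 e7
  simp only [v8_0] at e0; simp only [v8_1] at e1; simp only [v8_2] at e2
  simp only [v8_3] at e3; simp only [v8_4] at e4; simp only [v8_5] at e5
  simp only [v8_6] at e6; simp only [v8_7] at e7
  simp only [phiF, AddMonoidHom.coe_mk, ZeroHom.coe_mk] at h1
  rw [edgeEnd_apply]
  simp only [Matrix.cons_eq_zero_iff, Matrix.zero_empty, and_true]
  omega

instance chairDirSys : DirectedSystem (fun _ : ℕ => Fin 10 → ℤ)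
    (fun i j (_ : i ≤ j) => ⇑(edgeEnd ^ (j - i) : AddMonoid.End (Fin 10 → ℤ))) where
  map_self i x := by simp
  map_map {k j i} hij hjk x := by
    rw [show ((edgeEnd ^ (k - j)) ((edgeEnd ^ (j - i)) x)
        = ((edgeEnd ^ (k - j)) * (edgeEnd ^ (j - i))) x) from rfl, ← pow_add,
      show k - j + (j - i) = k - i by omega]

/-- The compatible family of maps to `ℚ × ℤ⁸`. -/
def gmap (n : ℕ) : (Fin 10 → ℤ) →+ ℚ × (Fin 8 → ℤ) where
  toFun v := ((phiF v : ℚ) / 2 ^ n, psiF v)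
  map_zero' := by simp
  map_add' x y := by
    simp only [map_add, Prod.mk_add_mk]
    congr 1
    push_cast
    ring

lemma gmap_compat (i j : ℕ) (hij : i ≤ j) (v : Fin 10 → ℤ) :
    gmap j ((edgeEnd ^ (j - i) : AddMonoid.End (Fin 10 → ℤ)) v) = gmap i v := by
  simp only [gmap, AddMonoidHom.coe_mk, ZeroHom.coe_mk, phiF_pow, psiF_pow, Prod.mk.injEq]
  refine ⟨?_, trivial⟩
  have h2 : (2 : ℚ) ^ j = 2 ^ (j - i) * 2 ^ i := by
    rw [← pow_add]; congr 1; omega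
  push_cast
  rw [h2, mul_div_mul_left _ _ (by positivity)]

/-- The explicit preimage of `(m, t)`. -/
def sol (m : ℤ) (t : Fin 8 → ℤ) : Fin 10 → ℤ :=
  ![t 0 + t 1 + t 2 + t 3, t 1 + t 2 + t 3, t 2 + t 3, m - t 2 - t 3,
    m - t 2 - t 3 - t 4, m - t 2 - t 3 - t 4 - t 5, t 3, 0,
    m - t 2 - t 3 - t 4 - t 5 - t 6, m - t 2 - t 3 - t 4 - t 5 - t 6 - t 7]

lemma phiF_sol (m : ℤ) (t : Fin 8 → ℤ) : phiF (sol m t) = m := by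
  simp [phiF, sol, v10_2, v10_3]

lemma psiF_sol (m : ℤ) (t : Fin 8 → ℤ) : psiF (sol m t) = t := by
  funext k
  rw [psiF_apply]
  simp only [sol, v10_0, v10_1, v10_2, v10_3, v10_4, v10_5, v10_6, v10_7, v10_8, v10_9]
  fin_cases k <;>
    simp [v8_0, v8_1, v8_2, v8_3, v8_4, v8_5, v8_6, v8_7]

lemma dyadic_mem (m : ℤ) (n : ℕ) : (m : ℚ) / 2 ^ n ∈ dyadic := by
  have h : ((2 : ℚ) ^ n)⁻¹ ∈ dyadic := AddSubgroup.subset_closure ⟨n, rfl⟩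
  have := AddSubgroup.zsmul_mem dyadic h m
  rwa [zsmul_eq_mul, ← div_eq_mul_inv] at this

lemma dyadic_exists {q : ℚ} (hq : q ∈ dyadic) : ∃ (m : ℤ) (n : ℕ), q = (m : ℚ) / 2 ^ n := by
  let D : AddSubgroup ℚ :=
    { carrier := {q : ℚ | ∃ (m : ℤ) (n : ℕ), q = (m : ℚ) / 2 ^ n}
      zero_mem' := ⟨0, 0, by simp⟩
      add_mem' := by
        rintro a b ⟨m1, n1, rfl⟩ ⟨m2, n2, rfl⟩
        refine ⟨m1 * 2 ^ n2 + m2 * 2 ^ n1, n1 + n2, ?_⟩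
        push_cast
        rw [div_add_div _ _ (by positivity) (by positivity), pow_add]
        ring_nf
      neg_mem' := by
        rintro a ⟨m, n, rfl⟩
        exact ⟨-m, n, by push_cast; ring⟩ }
  have : dyadic ≤ D := by
    rw [dyadic]
    refine AddSubgroup.closure_le D |>.2 ?_
    rintro q ⟨n, rfl⟩
    exact ⟨1, n, by simp [div_eq_mul_inv]⟩
  exact this hq

/-- The bonding maps. -/
abbrev bond : ∀ i j : ℕ, i ≤ j → (Fin 10 → ℤ) →+ (Fin 10 → ℤ) :=
  fun i j _ => (edgeEnd ^ (j - i) : AddMonoid.End (Fin 10 → ℤ))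

/-- The lifted map out of the direct limit. -/
noncomputable def Fmap :
    AddCommGroup.DirectLimit (fun _ : ℕ => Fin 10 → ℤ) bond →+ ℚ × (Fin 8 → ℤ) :=
  AddCommGroup.DirectLimit.lift _ bond _ gmap (fun i j hij v => gmap_compat i j hij v)

lemma Fmap_of (n : ℕ) (v : Fin 10 → ℤ) :
    Fmap (AddCommGroup.DirectLimit.of _ bond n v) = gmap n v :=
  AddCommGroup.DirectLimit.lift_of _ _ _ _ _

lemma Fmap_injective : Function.Injective Fmap := by
  rw [injective_iff_map_eq_zero]
  intro x hx
  induction x using AddCommGroup.DirectLimit.induction_on with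
  | ih n v =>
    rw [Fmap_of] at hx
    have h1 : (phiF v : ℚ) / 2 ^ n = 0 := congrArg Prod.fst hx
    have h2 : psiF v = 0 := congrArg Prod.snd hx
    have h1' : phiF v = 0 := by
      field_simp at h1
      exact_mod_cast h1
    have hz : bond n (n + 1) (Nat.le_succ n) v = 0 := by
      have hb : bond n (n + 1) (Nat.le_succ n) v = edgeEnd v := by
        simp only [bond, Nat.add_sub_cancel_left, pow_one]
        rfl
      rw [hb]
      exact edgeEnd_eq_zero h1' h2
    rw [← AddCommGroup.DirectLimit.of_f (f := bond) (i := n) (j := n + 1) (Nat.le_succ n) v,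
      hz, map_zero]

lemma Fmap_range : Fmap.range = dyadic.prod (⊤ : AddSubgroup (Fin 8 → ℤ)) := by
  apply le_antisymm
  · rintro _ ⟨x, rfl⟩
    induction x using AddCommGroup.DirectLimit.induction_on with
    | ih n v =>
      rw [Fmap_of]
      exact AddSubgroup.mem_prod.2 ⟨dyadic_mem (phiF v) n, trivial⟩
  · rintro ⟨q, t⟩ hqt
    obtain ⟨hq, -⟩ := AddSubgroup.mem_prod.1 hqt
    obtain ⟨m, n, rfl⟩ := dyadic_exists hq
    refine ⟨AddCommGroup.DirectLimit.of _ bond n (sol m t), ?_⟩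
    rw [Fmap_of]
    simp only [gmap, AddMonoidHom.coe_mk, ZeroHom.coe_mk, phiF_sol, psiF_sol]

/-- The direct limit of `ℤ¹⁰ → ℤ¹⁰ → ⋯` with bonding maps given by multiplication by the
transpose of the chair edge-substitution matrix is isomorphic, as an abelian group,
to `ℤ[1/2] ⊕ ℤ⁸`. -/
theorem directLimit_edge_iso :
    Nonempty (AddCommGroup.DirectLimit (fun _ : ℕ => Fin 10 → ℤ)
        (fun i j _ => (id (edgeEnd ^ (j - i) : AddMonoid.End (Fin 10 → ℤ)) :
          (Fin 10 → ℤ) →+ (Fin 10 → ℤ)))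
      ≃+ ↥dyadic × (Fin 8 → ℤ)) :=
  ⟨((AddMonoidHom.ofInjective Fmap_injective).trans
    ((AddEquiv.addSubgroupCongr Fmap_range).trans
      ((AddSubgroup.prodEquiv dyadic ⊤).trans
        (AddEquiv.prodCongr (AddEquiv.refl _) AddSubgroup.topEquiv))))⟩
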